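/- Let (y₁,y₂) : [0,T) → (0,∞)² be a differentiable solution of the ODE system with y₁(0), y₂(0) > 0. Assume a₁ > 0, a₂ = 0, and that h₁(t)/h₂(t) ≡ c̃ for a constant c̃ > 0, and suppose c > 0 is a constant such that y₁(t)^{a₁} ≥ c·c̃·log(y₂(t)) for all t ∈ [0,T). Then for every t ∈ [0,T): ∫_{y₁(0)}^{y₁(t)} s^{−p₁₁}·exp(−p₁₂·(c·c̃)^{−1}·s^{a₁}) ds ≤ ∫₀ᵗ h₁(s) ds. Consequently, if ∫₀ᵗ h₁(s) ds ≤ ∫_{y₁(0)}^{∞} s^{−p₁₁}·exp(−p₁₂·(c·c̃)^{−1}·s^{a₁}) ds for all t ≥ 0, then for every finite S > 0 one has sup{ y₁(t) : t ∈ [0,T), t ≤ S } < ∞ (the first component does not blow up in finite time). -/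

import Mathlib

open MeasureTheory Set
open scoped Topology

/-- Theorem 1.3(b.2) of the paper. With `a₁ = p₂₁-p₁₁+1 > 0`,
`a₂ = p₁₂-p₂₂+1 = 0`, `h₁/h₂ ≡ c̃ > 0`, and a constant `c > 0` with
`y₁^{a₁} ≥ c c̃ log y₂` on `[0,T)`, one has
`∫_{y₁(0)}^{y₁(t)} s^{-p₁₁} exp(-p₁₂ (c c̃)⁻¹ s^{a₁}) ds ≤ ∫₀ᵗ h₁(s) ds` on
`[0,T)`; consequently, if `∫₀ᵗ h₁ ≤ ∫_{y₁(0)}^{∞} s^{-p₁₁} exp(-p₁₂(c c̃)⁻¹s^{a₁}) ds`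
for all `t ≥ 0` (the improper integral, taken as a Lebesgue integral with
values in `[0,∞]`, may be infinite), then `y₁` is bounded on `[0,T) ∩ [0,S]`
for every finite `S > 0`. -/
theorem statement16 (p11 p12 p21 p22 : ℝ)
    (hp11 : 0 ≤ p11) (hp12 : 0 ≤ p12) (hp21 : 0 ≤ p21) (hp22 : 0 ≤ p22)
    (h1 h2 : ℝ → ℝ)
    (hh1c : ContinuousOn h1 (Set.Ici 0)) (hh2c : ContinuousOn h2 (Set.Ici 0))
    (hh1p : ∀ t : ℝ, 0 ≤ t → 0 < h1 t) (hh2p : ∀ t : ℝ, 0 ≤ t → 0 < h2 t)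
    (ct : ℝ) (hct : 0 < ct) (hconst : ∀ t : ℝ, 0 ≤ t → h1 t / h2 t = ct)
    (T : ℝ) (hT : 0 < T)
    (y1 y2 : ℝ → ℝ)
    (hy1pos : ∀ t ∈ Set.Ico (0:ℝ) T, 0 < y1 t)
    (hy2pos : ∀ t ∈ Set.Ico (0:ℝ) T, 0 < y2 t)
    (hy1d : ∀ t ∈ Set.Ico (0:ℝ) T,
      HasDerivWithinAt y1 (h1 t * y1 t ^ p11 * y2 t ^ p12) (Set.Ico 0 T) t)
    (hy2d : ∀ t ∈ Set.Ico (0:ℝ) T,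
      HasDerivWithinAt y2 (h2 t * y2 t ^ p22 * y1 t ^ p21) (Set.Ico 0 T) t)
    (ha1 : 0 < p21 - p11 + 1) (ha2 : p12 - p22 + 1 = 0)
    (c : ℝ) (hc : 0 < c)
    (hbound : ∀ t ∈ Set.Ico (0:ℝ) T,
      c * ct * Real.log (y2 t) ≤ y1 t ^ (p21 - p11 + 1)) :
    (∀ t ∈ Set.Ico (0:ℝ) T,
      (∫ s in (y1 0)..(y1 t),
          s ^ (-p11) * Real.exp (-(p12 * (c * ct)⁻¹ * s ^ (p21 - p11 + 1)))) ≤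
        ∫ s in (0:ℝ)..t, h1 s) ∧
    ((∀ t : ℝ, 0 ≤ t →
        ENNReal.ofReal (∫ s in (0:ℝ)..t, h1 s) ≤
          ∫⁻ s in Set.Ioi (y1 0),
            ENNReal.ofReal
              (s ^ (-p11) * Real.exp (-(p12 * (c * ct)⁻¹ * s ^ (p21 - p11 + 1))))) →
      ∀ S : ℝ, 0 < S → ∃ C : ℝ, ∀ t ∈ Set.Ico (0:ℝ) T, t ≤ S → y1 t ≤ C) := by
  set g : ℝ → ℝ :=
    fun s => s ^ (-p11) * Real.exp (-(p12 * (c * ct)⁻¹ * s ^ (p21 - p11 + 1))) with hg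
  have hy10 : 0 < y1 0 := hy1pos 0 ⟨le_refl 0, hT⟩
  have hcct : 0 < c * ct := mul_pos hc hct
  -- continuity of g at positive points
  have gct : ∀ x : ℝ, 0 < x → ContinuousAt g x := by
    intro x hx
    have c1 : ContinuousAt (fun s : ℝ => s ^ (-p11)) x :=
      Real.continuousAt_rpow_const x (-p11) (Or.inl hx.ne')
    have c2 : ContinuousAt (fun s : ℝ => s ^ (p21 - p11 + 1)) x :=
      Real.continuousAt_rpow_const x _ (Or.inl hx.ne')
    exact c1.mul (((continuousAt_const.mul c2)).neg.rexp)
  have gnonneg : ∀ x : ℝ, 0 < x → 0 ≤ g x := fun x hx =>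
    mul_nonneg (Real.rpow_nonneg hx.le _) (Real.exp_nonneg _)
  have gint : ∀ u v : ℝ, 0 < u → 0 < v → IntervalIntegrable g volume u v := by
    intro u v hu hv
    apply ContinuousOn.intervalIntegrable
    intro x hx
    exact (gct x (lt_of_lt_of_le (lt_min hu hv) hx.1)).continuousWithinAt
  have gmsAt : ∀ x : ℝ, 0 < x → StronglyMeasurableAtFilter g (𝓝 x) volume := by
    intro x hx
    refine AEStronglyMeasurable.stronglyMeasurableAtFilter_of_mem ?_ (Ioi_mem_nhds hx)
    exact ContinuousOn.aestronglyMeasurable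
      (fun z hz => (gct z hz).continuousWithinAt) measurableSet_Ioi
  -- the antiderivative G
  set G : ℝ → ℝ := fun x => ∫ s in (y1 0)..x, g s with hGdef
  have hG : ∀ x : ℝ, 0 < x → HasDerivAt G (g x) x := by
    intro x hx
    exact intervalIntegral.integral_hasDerivAt_right (gint _ _ hy10 hx) (gmsAt x hx) (gct x hx)
  have y1cont : ContinuousOn y1 (Set.Ico 0 T) := fun t ht => (hy1d t ht).continuousWithinAt
  -- h1 interval integrability on nonneg intervals
  have h1int : ∀ u v : ℝ, 0 ≤ u → 0 ≤ v → IntervalIntegrable h1 volume u v := by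
    intro u v hu hv
    apply ContinuousOn.intervalIntegrable
    apply hh1c.mono
    intro x hx
    exact le_trans (le_min hu hv) hx.1
  -- the key monotonicity
  set φ : ℝ → ℝ := fun t => (∫ s in (0:ℝ)..t, h1 s) - G (y1 t) with hφdef
  have hφmono : MonotoneOn φ (Set.Ico 0 T) := by
    apply monotoneOn_of_hasDerivWithinAt_nonneg (convex_Ico 0 T)
      (f' := fun t => h1 t - g (y1 t) * (h1 t * y1 t ^ p11 * y2 t ^ p12))
    · -- continuity of φ on Ico 0 T
      apply ContinuousOn.sub
      · have : ContinuousOn (fun t => ∫ s in (0:ℝ)..t, h1 s) (Set.uIcc 0 T) :=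
          intervalIntegral.continuousOn_primitive_interval'
            (h1int 0 T le_rfl hT.le) left_mem_uIcc
        apply this.mono
        rw [Set.uIcc_of_le hT.le]
        exact Set.Ico_subset_Icc_self
      · intro t ht
        exact ((hG _ (hy1pos t ht)).continuousAt).comp_continuousWithinAt (y1cont t ht)
    · -- derivative on the interior
      intro t ht
      rw [interior_Ico] at ht
      have htm : t ∈ Set.Ico (0:ℝ) T := ⟨ht.1.le, ht.2⟩
      have hIsub : Set.Ioo (0:ℝ) T ⊆ Set.Ico 0 T := Set.Ioo_subset_Ico_self
      apply HasDerivWithinAt.sub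
      · rw [interior_Ico]
        have : HasDerivAt (fun u => ∫ s in (0:ℝ)..u, h1 s) (h1 t) t := by
          refine intervalIntegral.integral_hasDerivAt_right (h1int 0 t le_rfl ht.1.le) ?_ ?_
          · exact AEStronglyMeasurable.stronglyMeasurableAtFilter_of_mem
              (hh1c.aestronglyMeasurable measurableSet_Ici) (Ici_mem_nhds ht.1)
          · exact hh1c.continuousAt (Ici_mem_nhds ht.1)
        exact this.hasDerivWithinAt
      · rw [interior_Ico]
        have hy1' : HasDerivWithinAt y1 (h1 t * y1 t ^ p11 * y2 t ^ p12) (Set.Ioo 0 T) t :=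
          (hy1d t htm).mono hIsub
        exact (hG _ (hy1pos t htm)).comp_hasDerivWithinAt t hy1'
    · -- nonnegativity of the derivative
      intro t ht
      rw [interior_Ico] at ht
      have htm : t ∈ Set.Ico (0:ℝ) T := ⟨ht.1.le, ht.2⟩
      have hy1t : 0 < y1 t := hy1pos t htm
      have hy2t : 0 < y2 t := hy2pos t htm
      have hh1t : 0 < h1 t := hh1p t ht.1.le
      rw [sub_nonneg]
      have e1 : y1 t ^ (-p11) * y1 t ^ p11 = 1 := by
        rw [← Real.rpow_add hy1t]; simp
      have key : Real.exp (-(p12 * (c * ct)⁻¹ * y1 t ^ (p21 - p11 + 1))) * y2 t ^ p12 ≤ 1 := by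
        rw [Real.rpow_def_of_pos hy2t, ← Real.exp_add, Real.exp_le_one_iff]
        have hb := hbound t htm
        have h2' := mul_le_mul_of_nonneg_left hb
          (mul_nonneg hp12 (inv_nonneg.mpr hcct.le))
        have h3' : p12 * (c * ct)⁻¹ * (c * ct * Real.log (y2 t))
            = p12 * Real.log (y2 t) := by
          field_simp
        rw [h3'] at h2'
        nlinarith [h2']
      calc g (y1 t) * (h1 t * y1 t ^ p11 * y2 t ^ p12)
          = (y1 t ^ (-p11) * y1 t ^ p11) *
            (Real.exp (-(p12 * (c * ct)⁻¹ * y1 t ^ (p21 - p11 + 1))) * y2 t ^ p12) * h1 t := by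
            simp only [hg]; ring
        _ ≤ 1 * 1 * h1 t := by
            rw [e1, one_mul, one_mul, one_mul]
            exact mul_le_of_le_one_left hh1t.le key
        _ = h1 t := by ring
  -- part 1
  have part1 : ∀ t ∈ Set.Ico (0:ℝ) T, G (y1 t) ≤ ∫ s in (0:ℝ)..t, h1 s := by
    intro t ht
    have h0 : (0:ℝ) ∈ Set.Ico (0:ℝ) T := ⟨le_refl 0, hT⟩
    have := hφmono h0 ht ht.1
    have hφ0 : φ 0 = 0 := by
      simp [hφdef, hGdef, intervalIntegral.integral_same]
    rw [hφ0] at this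
    simp only [hφdef] at this
    linarith
  refine ⟨part1, ?_⟩
  -- part 2
  intro H S hS
  by_contra hCo
  push_neg at hCo
  set K : ℝ := ∫ s in (0:ℝ)..T, h1 s with hKdef
  have hKt : ∀ t ∈ Set.Ico (0:ℝ) T, (∫ s in (0:ℝ)..t, h1 s) ≤ K := by
    intro t ht
    have hadd := intervalIntegral.integral_add_adjacent_intervals
      (h1int 0 t le_rfl ht.1) (h1int t T ht.1 hT.le)
    have hnn : 0 ≤ ∫ s in t..T, h1 s :=
      intervalIntegral.integral_nonneg ht.2.le
        (fun x hx => (hh1p x (le_trans ht.1 hx.1)).le)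
    rw [hKdef, ← hadd]
    linarith
  -- each truncated integral of g is bounded by K
  have hB : ∀ n : ℕ, (∫ s in (y1 0)..(y1 0 + n), g s) ≤ K := by
    intro n
    obtain ⟨t, htm, _, hgt⟩ := hCo (y1 0 + n)
    have hx : (0:ℝ) < y1 0 + n := by positivity
    have hy1t : 0 < y1 t := hy1pos t htm
    have hadd := intervalIntegral.integral_add_adjacent_intervals
      (gint _ _ hy10 hx) (gint _ _ hx hy1t)
    have hnn : 0 ≤ ∫ s in (y1 0 + n)..(y1 t), g s :=
      intervalIntegral.integral_nonneg hgt.le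
        (fun x hxm => gnonneg x (lt_of_lt_of_le hx hxm.1))
    have h1le := part1 t htm
    have h2le := hKt t htm
    have : G (y1 t) = (∫ s in (y1 0)..(y1 0 + n), g s) + ∫ s in (y1 0 + n)..(y1 t), g s :=
      hadd.symm
    simp only [hGdef] at this h1le
    linarith
  -- the full improper integral is ≤ K
  have hIoi : Set.Ioi (y1 0) = ⋃ n : ℕ, Set.Ioc (y1 0) (y1 0 + n) := by
    ext x
    simp only [Set.mem_Ioi, Set.mem_iUnion, Set.mem_Ioc]
    constructor
    · intro hx
      obtain ⟨n, hn⟩ := exists_nat_ge (x - y1 0)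
      exact ⟨n, hx, by linarith⟩
    · rintro ⟨n, hn, -⟩
      exact hn
  have hKnn : 0 ≤ K :=
    intervalIntegral.integral_nonneg hT.le (fun x hx => (hh1p x hx.1).le)
  have hIle : (∫⁻ s in Set.Ioi (y1 0), ENNReal.ofReal (g s)) ≤ ENNReal.ofReal K := by
    rw [hIoi, setLIntegral_iUnion_of_directed]
    · apply iSup_le
      intro n
      have hx : (0:ℝ) < y1 0 + n := by positivity
      have hle : y1 0 ≤ y1 0 + n := le_add_of_nonneg_right (Nat.cast_nonneg n)
      have hIntOn : IntegrableOn g (Set.Ioc (y1 0) (y1 0 + n)) volume := by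
        rw [← Set.uIoc_of_le hle]
        exact (gint _ _ hy10 hx).def'
      have hae : 0 ≤ᵐ[volume.restrict (Set.Ioc (y1 0) (y1 0 + n))] g := by
        refine (ae_restrict_iff' measurableSet_Ioc).2 (Filter.Eventually.of_forall ?_)
        exact fun x hxm => gnonneg x (lt_trans hy10 hxm.1)
      have heq := MeasureTheory.ofReal_integral_eq_lintegral_ofReal hIntOn hae
      rw [← heq]
      apply ENNReal.ofReal_le_ofReal
      have : (∫ s in (y1 0)..(y1 0 + n), g s) = ∫ s in Set.Ioc (y1 0) (y1 0 + n), g s :=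
        intervalIntegral.integral_of_le hle
      rw [← this]
      exact hB n
    · intro m n
      refine ⟨max m n, ?_, ?_⟩ <;>
        · apply Set.Ioc_subset_Ioc_right
          have : ((m:ℝ) ⊔ (n:ℝ)) ≤ ((max m n : ℕ) : ℝ) := by
            simp [Nat.cast_max]
          simp only [add_le_add_iff_left]
          first
            | exact le_trans (le_max_left (m:ℝ) (n:ℝ)) this
            | exact le_trans (le_max_right (m:ℝ) (n:ℝ)) this
  -- contradiction with strict growth of ∫ h1 past time T
  have hK2 : K < ∫ s in (0:ℝ)..(T+1), h1 s := by
    have hadd := intervalIntegral.integral_add_adjacent_intervals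
      (h1int 0 T le_rfl hT.le) (h1int T (T+1) hT.le (by linarith))
    have hpos : 0 < ∫ s in T..(T+1), h1 s := by
      apply intervalIntegral.intervalIntegral_pos_of_pos_on
        (h1int T (T+1) hT.le (by linarith))
      · exact fun x hx => hh1p x (le_trans hT.le hx.1.le)
      · linarith
    rw [← hadd]
    linarith
  have hH := H (T+1) (by linarith)
  have : ENNReal.ofReal (∫ s in (0:ℝ)..(T+1), h1 s) ≤ ENNReal.ofReal K :=
    le_trans hH hIle
  rw [ENNReal.ofReal_le_ofReal_iff hKnn] at this
  linarith
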